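/- arXiv:2203.07129 — 2 statements merged into one kernel-verified Lean document; each statement's English description precedes it below -/
import Mathlib

section
/- In the monoid B(X) of binary relations on a set X, the inclusion order ⊆ is compatible with multiplication: if μ ⊆ τ and μ' ⊆ τ' then μμ' ⊆ ττ', but the inclusion order contains and does not in general coincide with the natural partial order ≤ (a ≤ b iff a = e b f for projections e, f): for X = {1,2,3,4}, τ = {(1,3),(1,4),(2,3),(2,4)} and μ = {(1,3),(2,4)}, one has μ ⊆ τ but not μ ≤ τ. -/
def rcomp {X : Type*} (r s : X → X → Prop) : X → X → Prop :=
  fun x z => ∃ y, r x y ∧ s y z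

/-- In B(X) the inclusion order is compatible with multiplication, but it does not
coincide with the natural partial order: for X = {1,2,3,4},
τ = {(1,3),(1,4),(2,3),(2,4)} and μ = {(1,3),(2,4)} we have μ ⊆ τ but not μ ≤ τ. -/
theorem stmt11 :
    (∀ (X : Type*) (μ τ μ' τ' : X → X → Prop),
      (∀ x y, μ x y → τ x y) → (∀ x y, μ' x y → τ' x y) →
      ∀ x y, rcomp μ μ' x y → rcomp τ τ' x y) ∧
    (let τ : Fin 4 → Fin 4 → Prop := fun x y => (x = 0 ∨ x = 1) ∧ (y = 2 ∨ y = 3)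
     let μ : Fin 4 → Fin 4 → Prop := fun x y => (x = 0 ∧ y = 2) ∨ (x = 1 ∧ y = 3)
     (∀ x y, μ x y → τ x y) ∧
     ¬ ∃ e f : Fin 4 → Fin 4 → Prop,
        (∀ x y, e x y → x = y) ∧ (∀ x y, f x y → x = y) ∧
        μ = rcomp e (rcomp τ f)) := by
  constructor
  · intro X μ τ μ' τ' h h' x y ⟨z, hz1, hz2⟩
    exact ⟨z, h _ _ hz1, h' _ _ hz2⟩
  · intro τ μ
    refine ⟨fun x y h => ?_, ?_⟩
    · rcases h with ⟨hx, hy⟩ | ⟨hx, hy⟩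
      · exact ⟨Or.inl hx, Or.inl hy⟩
      · exact ⟨Or.inr hx, Or.inr hy⟩
    · rintro ⟨e, f, he, hf, heq⟩
      have h02 : μ 0 2 := Or.inl ⟨rfl, rfl⟩
      have h13 : μ 1 3 := Or.inr ⟨rfl, rfl⟩
      rw [heq] at h02 h13
      obtain ⟨a, ha, b, hb, hb2⟩ := h02
      obtain ⟨c, hc, d, hd, hd3⟩ := h13
      have hea : a = 0 := (he _ _ ha).symm
      have hfb : b = 2 := hf _ _ hb2
      have hfd : d = 3 := hf _ _ hd3
      have hec : c = 1 := (he _ _ hc).symm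
      have : μ 0 3 := by
        rw [heq]
        exact ⟨0, hea ▸ ha, 3, ⟨Or.inl rfl, Or.inr rfl⟩, hfd ▸ hd3⟩
      rcases this with ⟨h1, h2⟩ | ⟨h1, h2⟩ <;> simp_all
end

section
/- Right partial actions of a monoid T on a set X are in bijective correspondence with partial multiactions of T on X satisfying the left determinism condition (LD): for all t ∈ T and x ∈ X there exists at most one y ∈ X with (x,t,y) an edge. -/
/-- A partial multiaction of a monoid T on a set X. -/
structure PartialMultiaction (T X : Type*) [Monoid T] where
  E : Set (X × T × X)
  loops : ∀ x : X, (x, (1 : T), x) ∈ E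
  lbl : ∀ t : T, ∃ x y : X, (x, t, y) ∈ E
  comp : ∀ (x y z : X) (s t : T), (x, s, y) ∈ E → (y, t, z) ∈ E → (x, s * t, z) ∈ E

/-- A right partial action of a monoid T on a set X. -/
structure RightPartialAction (T X : Type*) [Monoid T] where
  act : X → T → Option X
  total : ∀ t : T, ∃ x : X, (act x t).isSome
  one : ∀ x : X, act x 1 = some x
  assoc : ∀ (x : X) (s t : T) (y z : X),
    act x s = some y → act y t = some z → act x (s * t) = some z

namespace PMA

open Classical in
noncomputable def toFun {T X : Type*} [Monoid T] (a : RightPartialAction T X) :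
    {G : PartialMultiaction T X //
      ∀ (t : T) (x y y' : X), (x, t, y) ∈ G.E → (x, t, y') ∈ G.E → y = y'} :=
  ⟨{ E := {p | a.act p.1 p.2.1 = some p.2.2}
     loops := fun x => a.one x
     lbl := fun t => by
       obtain ⟨x, hx⟩ := a.total t
       obtain ⟨y, hy⟩ := Option.isSome_iff_exists.mp hx
       exact ⟨x, y, hy⟩
     comp := fun x y z s t hs ht => a.assoc x s t y z hs ht },
   fun t x y y' hy hy' => by
     simp only [Set.mem_setOf_eq] at hy hy'
     rw [hy] at hy'; exact Option.some_inj.mp hy'⟩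

open Classical in
noncomputable def pact {T X : Type*} [Monoid T] (G : PartialMultiaction T X)
    (x : X) (t : T) : Option X :=
  if h : ∃ y : X, (x, t, y) ∈ G.E then some h.choose else none

open Classical in
noncomputable def invFun {T X : Type*} [Monoid T]
    (G : {G : PartialMultiaction T X //
      ∀ (t : T) (x y y' : X), (x, t, y) ∈ G.E → (x, t, y') ∈ G.E → y = y'}) :
    RightPartialAction T X where
  act := pact G.1
  total t := by
    obtain ⟨x, y, hxy⟩ := G.1.lbl t
    exact ⟨x, by rw [pact, dif_pos ⟨y, hxy⟩]; rfl⟩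
  one x := by
    have h : ∃ y : X, (x, (1 : T), y) ∈ G.1.E := ⟨x, G.1.loops x⟩
    rw [pact, dif_pos h, Option.some_inj]
    exact G.2 1 x _ _ h.choose_spec (G.1.loops x)
  assoc x s t y z hs ht := by
    rw [pact] at hs ht ⊢
    by_cases h1 : ∃ w : X, (x, s, w) ∈ G.1.E
    · rw [dif_pos h1, Option.some_inj] at hs
      by_cases h2 : ∃ w : X, (y, t, w) ∈ G.1.E
      · rw [dif_pos h2, Option.some_inj] at ht
        have he : (x, s * t, z) ∈ G.1.E :=
          G.1.comp x y z s t (hs ▸ h1.choose_spec) (ht ▸ h2.choose_spec)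
        rw [dif_pos ⟨z, he⟩, Option.some_inj]
        exact G.2 (s * t) x _ _
          (Exists.choose_spec (⟨z, he⟩ : ∃ w : X, (x, s * t, w) ∈ G.1.E)) he
      · rw [dif_neg h2] at ht; exact absurd ht (by simp)
    · rw [dif_neg h1] at hs; exact absurd hs (by simp)

end PMA

/-- Right partial actions of T on X are in bijective correspondence with partial
multiactions of T on X satisfying the left determinism condition (LD), with edges
given by (x, t, x·t). -/
theorem stmt17 {T X : Type*} [Monoid T] :
    ∃ e : RightPartialAction T X ≃
      {G : PartialMultiaction T X //
        ∀ (t : T) (x y y' : X), (x, t, y) ∈ G.E → (x, t, y') ∈ G.E → y = y'},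
      ∀ (a : RightPartialAction T X) (x : X) (t : T) (y : X),
        (x, t, y) ∈ (e a).1.E ↔ a.act x t = some y := by
  classical
  refine ⟨⟨PMA.toFun, PMA.invFun, ?_, ?_⟩, fun a x t y => Iff.rfl⟩
  · intro a
    obtain ⟨act, total, one, assoc⟩ := a
    simp only [PMA.invFun, PMA.toFun]
    congr 1
    funext x t
    rw [PMA.pact]
    simp only [Set.mem_setOf_eq]
    split
    · rename_i h
      exact h.choose_spec.symm
    · rename_i h
      cases hx : act x t with
      | none => rfl
      | some y => exact absurd ⟨y, hx⟩ h
  · intro G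
    apply Subtype.ext
    have hdet := G.2
    cases G with
    | mk G hG =>
      cases G with
      | mk E loops lbl comp =>
        simp only [PMA.toFun]
        congr 1
        ext ⟨x, t, y⟩
        rw [Set.mem_setOf_eq, PMA.invFun]
        simp only [PMA.pact]
        constructor
        · intro h
          by_cases he : ∃ z : X, (x, t, z) ∈ E
          · rw [dif_pos he] at h
            rw [Option.some_inj] at h
            exact h ▸ he.choose_spec
          · rw [dif_neg he] at h; exact absurd h (by simp)
        · intro h
          have he : ∃ z : X, (x, t, z) ∈ E := ⟨y, h⟩
          rw [dif_pos he, Option.some_inj]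
          exact hG t x _ _ he.choose_spec h
end
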